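/- arXiv:1605.01606 — 3 statements merged into one kernel-verified Lean document; each statement's English description precedes it below -/
import Mathlib

section
/- Let A and P be real n×n matrices with P symmetric positive definite and AᵀP + PA = -2I. Let λ_m, λ_M > 0 satisfy λ_m‖x‖² ≤ xᵀPx ≤ λ_M‖x‖² for all x ∈ ℝⁿ. Let σ ∈ (0,1), set λ = (1-σ)/λ_M, and let α ∈ (0,λ) and λ₀, β, δ ≥ 0. Suppose x, f : ℝ → ℝⁿ are such that x is differentiable with x'(t) = A x(t) + f(t) for all t ≥ 0, and ‖P‖²‖f(t)‖² ≤ σ‖x(t)‖² + λ₀β·e^{-αt} + λ₀δ for all t ≥ 0. Then for all t ≥ 0, ‖x(t)‖² ≤ a·e^{-αt} + b, where a = (x(0)ᵀP x(0))/λ_m + λ₀β/(λ_m(λ-α)) and b = λ₀δ/(λ·λ_m); in particular ‖x(t)‖ ≤ √(a+b) for all t ≥ 0. -/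
open scoped RealInnerProductSpace Matrix

set_option maxHeartbeats 1000000 in
set_option synthInstance.maxHeartbeats 1000000 in
/-- Core estimate of Lemma 2: exponential-plus-constant bound on the squared norm of the
trajectory of a perturbed linear system governed by a Lyapunov equation. -/
theorem stmt_0 {n : ℕ} (A P : Matrix (Fin n) (Fin n) ℝ)
    (hPsymm : P.IsSymm)
    (hPpos : ∀ z : EuclideanSpace ℝ (Fin n), z ≠ 0 →
      0 < ⟪z, Matrix.toEuclideanCLM (𝕜 := ℝ) P z⟫)
    (hLyap : Aᵀ * P + P * A = (-2 : ℝ) • (1 : Matrix (Fin n) (Fin n) ℝ))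
    (lm lM : ℝ) (hlm : 0 < lm) (hlM : 0 < lM)
    (hquad : ∀ z : EuclideanSpace ℝ (Fin n),
      lm * ‖z‖ ^ 2 ≤ ⟪z, Matrix.toEuclideanCLM (𝕜 := ℝ) P z⟫ ∧
      ⟪z, Matrix.toEuclideanCLM (𝕜 := ℝ) P z⟫ ≤ lM * ‖z‖ ^ 2)
    (σ lam : ℝ) (hσ : σ ∈ Set.Ioo (0 : ℝ) 1) (hlam : lam = (1 - σ) / lM)
    (α : ℝ) (hα : α ∈ Set.Ioo 0 lam)
    (lam0 β δ : ℝ) (hlam0 : 0 ≤ lam0) (hβ : 0 ≤ β) (hδ : 0 ≤ δ)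
    (x f : ℝ → EuclideanSpace ℝ (Fin n))
    (hx : ∀ t ≥ (0 : ℝ), HasDerivAt x (Matrix.toEuclideanCLM (𝕜 := ℝ) A (x t) + f t) t)
    (hf : ∀ t ≥ (0 : ℝ), ‖Matrix.toEuclideanCLM (𝕜 := ℝ) P‖ ^ 2 * ‖f t‖ ^ 2 ≤
      σ * ‖x t‖ ^ 2 + lam0 * β * Real.exp (-α * t) + lam0 * δ)
    (a b : ℝ)
    (ha : a = ⟪x 0, Matrix.toEuclideanCLM (𝕜 := ℝ) P (x 0)⟫ / lm + lam0 * β / (lm * (lam - α)))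
    (hb : b = lam0 * δ / (lam * lm)) :
    (∀ t ≥ (0 : ℝ), ‖x t‖ ^ 2 ≤ a * Real.exp (-α * t) + b) ∧
    (∀ t ≥ (0 : ℝ), ‖x t‖ ≤ Real.sqrt (a + b)) := by
  obtain ⟨hσ0, hσ1⟩ := hσ
  obtain ⟨hα0, hαlam⟩ := hα
  set T := Matrix.toEuclideanCLM (𝕜 := ℝ) P with hTdef
  set S := Matrix.toEuclideanCLM (𝕜 := ℝ) A with hSdef
  have hlam_pos : 0 < lam := lt_trans hα0 hαlam
  have hlamα : 0 < lam - α := sub_pos.mpr hαlam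
  -- P (and hence T) is self-adjoint
  have hstarP : star P = P := by
    rw [Matrix.star_eq_conjTranspose, Matrix.conjTranspose_eq_transpose_of_trivial]
    exact hPsymm
  have hTadj : ContinuousLinearMap.adjoint T = T := by
    rw [← ContinuousLinearMap.star_eq_adjoint, hTdef, ← map_star, hstarP]
  have hTsymm : ∀ u v : EuclideanSpace ℝ (Fin n), ⟪T u, v⟫ = ⟪u, T v⟫ := by
    intro u v
    conv_lhs => rw [← hTadj]
    exact ContinuousLinearMap.adjoint_inner_left T v u
  -- Lyapunov identity pointwise
  have hLyapE : ∀ z : EuclideanSpace ℝ (Fin n), 2 * ⟪z, T (S z)⟫ = -2 * ‖z‖ ^ 2 := by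
    intro z
    have h1 : Matrix.toEuclideanCLM (𝕜 := ℝ) (Aᵀ * P + P * A) z
        = ContinuousLinearMap.adjoint S (T z) + T (S z) := by
      have hAT : (Aᵀ : Matrix (Fin n) (Fin n) ℝ) = star A := by
        rw [Matrix.star_eq_conjTranspose, Matrix.conjTranspose_eq_transpose_of_trivial]
      rw [map_add, map_mul, map_mul, hAT, map_star, ContinuousLinearMap.star_eq_adjoint]
      rfl
    have h2 : Matrix.toEuclideanCLM (𝕜 := ℝ) (Aᵀ * P + P * A) z = (-2 : ℝ) • z := by
      rw [hLyap, map_smul, map_one]; rfl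
    have h3 : ⟪z, ContinuousLinearMap.adjoint S (T z) + T (S z)⟫ = ⟪z, (-2 : ℝ) • z⟫ := by
      rw [← h1, h2]
    rw [inner_add_right, ContinuousLinearMap.adjoint_inner_right] at h3
    have h4 : ⟪S z, T z⟫ = ⟪z, T (S z)⟫ := by
      rw [← hTsymm (S z) z, real_inner_comm]
    rw [h4, real_inner_smul_right, real_inner_self_eq_norm_sq] at h3
    linarith
  -- the Lyapunov function
  set V : ℝ → ℝ := fun t => ⟪x t, T (x t)⟫ with hVdef
  have hVderiv : ∀ t ≥ (0 : ℝ), HasDerivAt V (2 * ⟪x t, T (S (x t) + f t)⟫) t := by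
    intro t ht
    have h1 := hx t ht
    have h2 : HasDerivAt (fun s => T (x s)) (T (S (x t) + f t)) t :=
      (T.hasFDerivAt.comp_hasDerivAt t h1 : _)
    have h3 := (h1.inner ℝ h2 : _)
    refine h3.congr_deriv ?_
    have h4 : ⟪S (x t) + f t, T (x t)⟫ = ⟪x t, T (S (x t) + f t)⟫ := by
      rw [← hTsymm (S (x t) + f t) (x t), real_inner_comm]
    rw [h4]; ring
  -- quadratic bounds and positivity
  have hV_lb : ∀ t, lm * ‖x t‖ ^ 2 ≤ V t := fun t => (hquad (x t)).1
  have hV_ub : ∀ t, V t ≤ lM * ‖x t‖ ^ 2 := fun t => (hquad (x t)).2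
  have hV0 : 0 ≤ V 0 := le_trans (by positivity) (hV_lb 0)
  -- differential inequality for V
  have hVineq : ∀ t ≥ (0 : ℝ), 2 * ⟪x t, T (S (x t) + f t)⟫ ≤
      -lam * V t + lam0 * β * Real.exp (-α * t) + lam0 * δ := by
    intro t ht
    have hsplit : ⟪x t, T (S (x t) + f t)⟫ = ⟪x t, T (S (x t))⟫ + ⟪x t, T (f t)⟫ := by
      rw [map_add, inner_add_right]
    have hLy := hLyapE (x t)
    have hcs : ⟪x t, T (f t)⟫ ≤ ‖x t‖ * (‖T‖ * ‖f t‖) := by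
      refine le_trans (real_inner_le_norm _ _) ?_
      exact mul_le_mul_of_nonneg_left (T.le_opNorm (f t)) (norm_nonneg _)
    have hfb := hf t ht
    have hVub := hV_ub t
    have hE : 0 < Real.exp (-α * t) := Real.exp_pos _
    have h2ab : 2 * (‖x t‖ * (‖T‖ * ‖f t‖)) ≤ ‖x t‖ ^ 2 + ‖T‖ ^ 2 * ‖f t‖ ^ 2 := by
      nlinarith [sq_nonneg (‖x t‖ - ‖T‖ * ‖f t‖)]
    have hlamlM : lam * lM = 1 - σ := by
      rw [hlam]; field_simp
    have hVlam : lam * V t ≤ (1 - σ) * ‖x t‖ ^ 2 := by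
      calc lam * V t ≤ lam * (lM * ‖x t‖ ^ 2) :=
            mul_le_mul_of_nonneg_left hVub (le_of_lt hlam_pos)
        _ = (1 - σ) * ‖x t‖ ^ 2 := by rw [← mul_assoc, hlamlM]
    rw [hsplit]
    linarith [hLy, hcs, h2ab, hfb, hVlam]
  -- comparison function
  set C1 : ℝ := V 0 + lam0 * β / (lam - α) with hC1def
  set C2 : ℝ := lam0 * δ / lam with hC2def
  have hC1_nonneg : 0 ≤ C1 := by positivity
  have hC2_nonneg : 0 ≤ C2 := by positivity
  set g : ℝ → ℝ := fun t => (V t - C1 * Real.exp (-α * t) - C2) * Real.exp (lam * t) with hgdef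
  have hgderiv : ∀ t ≥ (0 : ℝ), HasDerivAt g
      ((2 * ⟪x t, T (S (x t) + f t)⟫ - C1 * (Real.exp (-α * t) * -α)) * Real.exp (lam * t)
        + (V t - C1 * Real.exp (-α * t) - C2) * (Real.exp (lam * t) * lam)) t := by
    intro t ht
    have hE1 : HasDerivAt (fun s => Real.exp (-α * s)) (Real.exp (-α * t) * -α) t := by
      simpa using ((hasDerivAt_id t).const_mul (-α)).exp
    have hE2 : HasDerivAt (fun s => Real.exp (lam * s)) (Real.exp (lam * t) * lam) t := by
      simpa using ((hasDerivAt_id t).const_mul lam).exp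
    exact (((hVderiv t ht).sub (hE1.const_mul C1)).sub_const C2).mul hE2
  have hgcont : ContinuousOn g (Set.Ici 0) :=
    fun t ht => ((hgderiv t ht).continuousAt).continuousWithinAt
  have hganti : AntitoneOn g (Set.Ici 0) := by
    apply antitoneOn_of_deriv_nonpos (convex_Ici 0) hgcont
    · intro t ht
      rw [interior_Ici] at ht
      exact ((hgderiv t (le_of_lt ht)).differentiableAt).differentiableWithinAt
    · intro t ht
      rw [interior_Ici] at ht
      have ht' : (0 : ℝ) ≤ t := le_of_lt ht
      rw [(hgderiv t ht').deriv]
      have hVi := hVineq t ht'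
      have hE : 0 < Real.exp (-α * t) := Real.exp_pos _
      have hF : 0 < Real.exp (lam * t) := Real.exp_pos _
      have hC2lam : lam * C2 = lam0 * δ := by
        rw [hC2def]; field_simp
      have hC1b : lam0 * β ≤ (lam - α) * C1 := by
        rw [hC1def]
        have : (lam - α) * (V 0 + lam0 * β / (lam - α))
            = (lam - α) * V 0 + lam0 * β := by field_simp
        rw [this]
        nlinarith
      have key : (2 * ⟪x t, T (S (x t) + f t)⟫ - C1 * (Real.exp (-α * t) * -α))
          + (V t - C1 * Real.exp (-α * t) - C2) * lam ≤ 0 := by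
        nlinarith [mul_le_mul_of_nonneg_left hC1b (le_of_lt hE)]
      calc (2 * ⟪x t, T (S (x t) + f t)⟫ - C1 * (Real.exp (-α * t) * -α)) * Real.exp (lam * t)
            + (V t - C1 * Real.exp (-α * t) - C2) * (Real.exp (lam * t) * lam)
          = ((2 * ⟪x t, T (S (x t) + f t)⟫ - C1 * (Real.exp (-α * t) * -α))
            + (V t - C1 * Real.exp (-α * t) - C2) * lam) * Real.exp (lam * t) := by ring
        _ ≤ 0 := mul_nonpos_of_nonpos_of_nonneg key (le_of_lt hF)
  -- main bound on V
  have hVbound : ∀ t ≥ (0 : ℝ), V t ≤ C1 * Real.exp (-α * t) + C2 := by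
    intro t ht
    have hg0 : g 0 ≤ 0 := by
      have : g 0 = V 0 - C1 - C2 := by simp [hgdef]
      rw [this, hC1def]
      have h1 : 0 ≤ lam0 * β / (lam - α) := by positivity
      linarith
    have hgt : g t ≤ g 0 := hganti (Set.self_mem_Ici) ht ht
    have hF : 0 < Real.exp (lam * t) := Real.exp_pos _
    have : (V t - C1 * Real.exp (-α * t) - C2) * Real.exp (lam * t) ≤ 0 := le_trans hgt hg0
    nlinarith
  -- passing to ‖x t‖²
  have hab1 : a = C1 / lm := by
    rw [ha, hC1def, hVdef]
    field_simp
  have hab2 : b = C2 / lm := by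
    rw [hb, hC2def]
    field_simp
  have main : ∀ t ≥ (0 : ℝ), ‖x t‖ ^ 2 ≤ a * Real.exp (-α * t) + b := by
    intro t ht
    have h1 := hV_lb t
    have h2 := hVbound t ht
    rw [hab1, hab2]
    rw [div_mul_eq_mul_div, ← add_div, le_div_iff₀ hlm]
    nlinarith
  refine ⟨main, fun t ht => ?_⟩
  have ha_nonneg : 0 ≤ a := by rw [hab1]; positivity
  have hb_nonneg : 0 ≤ b := by rw [hab2]; positivity
  have hE1 : Real.exp (-α * t) ≤ 1 := by
    rw [Real.exp_le_one_iff]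
    nlinarith
  have h2 : ‖x t‖ ^ 2 ≤ a + b := by
    have := main t ht
    nlinarith
  rw [Real.le_sqrt (norm_nonneg _) (by linarith)]
  exact h2
end

section
/- Let A and P be real n×n matrices with P symmetric positive definite and AᵀP + PA = -2I. Let λ_M > 0 satisfy xᵀPx ≤ λ_M‖x‖² for all x ∈ ℝⁿ. Let σ ∈ (0,1), λ = (1-σ)/λ_M, α > 0 and λ₀, β, δ ≥ 0. Suppose x, f : ℝ → ℝⁿ are such that x is differentiable with x'(t) = A x(t) + f(t) for all t ≥ 0, and ‖P‖²‖f(t)‖² ≤ σ‖x(t)‖² + λ₀β·e^{-αt} + λ₀δ for all t ≥ 0. Then the function V(t) := x(t)ᵀP x(t) is differentiable on [0,∞) and satisfies V'(t) ≤ -λ·V(t) + λ₀β·e^{-αt} + λ₀δ for all t ≥ 0. -/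
open scoped RealInnerProductSpace Matrix

/-- Lyapunov derivative estimate (24) in the proof of Lemma 2. -/
theorem stmt_1 {n : ℕ} (A P : Matrix (Fin n) (Fin n) ℝ)
    (hPsymm : P.IsSymm)
    (hPpos : ∀ z : EuclideanSpace ℝ (Fin n), z ≠ 0 →
      0 < ⟪z, Matrix.toEuclideanCLM (𝕜 := ℝ) P z⟫)
    (hLyap : Aᵀ * P + P * A = (-2 : ℝ) • (1 : Matrix (Fin n) (Fin n) ℝ))
    (lM : ℝ) (hlM : 0 < lM)
    (hquad : ∀ z : EuclideanSpace ℝ (Fin n),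
      ⟪z, Matrix.toEuclideanCLM (𝕜 := ℝ) P z⟫ ≤ lM * ‖z‖ ^ 2)
    (σ lam : ℝ) (hσ : σ ∈ Set.Ioo (0 : ℝ) 1) (hlam : lam = (1 - σ) / lM)
    (α : ℝ) (hα : 0 < α)
    (lam0 β δ : ℝ) (hlam0 : 0 ≤ lam0) (hβ : 0 ≤ β) (hδ : 0 ≤ δ)
    (x f : ℝ → EuclideanSpace ℝ (Fin n))
    (hx : ∀ t ≥ (0 : ℝ), HasDerivAt x (Matrix.toEuclideanCLM (𝕜 := ℝ) A (x t) + f t) t)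
    (hf : ∀ t ≥ (0 : ℝ), ‖Matrix.toEuclideanCLM (𝕜 := ℝ) P‖ ^ 2 * ‖f t‖ ^ 2 ≤
      σ * ‖x t‖ ^ 2 + lam0 * β * Real.exp (-α * t) + lam0 * δ)
    (V : ℝ → ℝ)
    (hV : ∀ t, V t = ⟪x t, Matrix.toEuclideanCLM (𝕜 := ℝ) P (x t)⟫) :
    (∀ t ≥ (0 : ℝ), DifferentiableAt ℝ V t) ∧
    (∀ t ≥ (0 : ℝ), deriv V t ≤ -lam * V t + lam0 * β * Real.exp (-α * t) + lam0 * δ) := by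
  obtain ⟨hσ0, hσ1⟩ := hσ
  set T := Matrix.toEuclideanCLM (𝕜 := ℝ) P with hT
  set TA := Matrix.toEuclideanCLM (𝕜 := ℝ) A with hTAdef
  -- star P = P
  have hstarP : star P = P := by
    ext i j
    simp [Matrix.star_apply]
    exact (congrFun (congrFun hPsymm j) i).symm
  have hTadj : ContinuousLinearMap.adjoint T = T := by
    rw [← ContinuousLinearMap.star_eq_adjoint, hT, ← map_star, hstarP]
  have hstarA : star A = Aᵀ := by
    ext i j
    simp [Matrix.star_apply]
  have hTAadj : ContinuousLinearMap.adjoint TA = Matrix.toEuclideanCLM (𝕜 := ℝ) Aᵀ := by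
    rw [← ContinuousLinearMap.star_eq_adjoint, hTAdef, ← map_star, hstarA]
  -- derivative of V
  have hVd : ∀ t ≥ (0 : ℝ), HasDerivAt V
      (⟪x t, T (TA (x t) + f t)⟫ + ⟪TA (x t) + f t, T (x t)⟫) t := by
    intro t ht
    have h1 := hx t ht
    have h2 : HasDerivAt (fun s => T (x s)) (T (TA (x t) + f t)) t :=
      T.hasFDerivAt.comp_hasDerivAt t h1
    have h3 := HasDerivAt.inner ℝ h1 h2
    have : V = fun s => ⟪x s, T (x s)⟫ := funext hV
    rw [this]
    exact h3
  refine ⟨fun t ht => (hVd t ht).differentiableAt, fun t ht => ?_⟩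
  have hderiv := (hVd t ht).deriv
  -- algebraic identity
  have key : ⟪x t, T (TA (x t) + f t)⟫ + ⟪TA (x t) + f t, T (x t)⟫
      = -2 * ‖x t‖ ^ 2 + 2 * ⟪T (x t), f t⟫ := by
    have hAterm : ⟪TA (x t), T (x t)⟫ + ⟪x t, T (TA (x t))⟫
        = -2 * ‖x t‖ ^ 2 := by
      have h1 : ⟪TA (x t), T (x t)⟫ = ⟪x t, (Matrix.toEuclideanCLM (𝕜 := ℝ) Aᵀ) (T (x t))⟫ := by
        rw [← hTAadj, ContinuousLinearMap.adjoint_inner_right]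
      have h2 : (Matrix.toEuclideanCLM (𝕜 := ℝ) Aᵀ) (T (x t)) + T (TA (x t))
          = Matrix.toEuclideanCLM (𝕜 := ℝ) (Aᵀ * P + P * A) (x t) := by
        simp [map_add, map_mul, hT, hTAdef]
      rw [h1, ← inner_add_right, h2, hLyap]
      have hid : Matrix.toEuclideanCLM (𝕜 := ℝ) ((-2 : ℝ) • (1 : Matrix (Fin n) (Fin n) ℝ)) (x t)
          = (-2 : ℝ) • x t := by
        rw [map_smul, map_one]; rfl
      rw [hid, real_inner_smul_right, real_inner_self_eq_norm_sq]
    have hf1 : ⟪f t, T (x t)⟫ = ⟪T (x t), f t⟫ := real_inner_comm _ _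
    have hf2 : ⟪x t, T (f t)⟫ = ⟪T (x t), f t⟫ := by
      rw [← ContinuousLinearMap.adjoint_inner_left, hTadj]
    rw [map_add, inner_add_right, inner_add_left, hf1, hf2]
    linarith [hAterm]
  rw [hderiv, key]
  -- bound the cross term
  have hcross : 2 * ⟪T (x t), f t⟫ ≤ ‖x t‖ ^ 2 + ‖T‖ ^ 2 * ‖f t‖ ^ 2 := by
    have h1 : ⟪T (x t), f t⟫ ≤ ‖T (x t)‖ * ‖f t‖ := real_inner_le_norm _ _
    have h2 : ‖T (x t)‖ ≤ ‖T‖ * ‖x t‖ := T.le_opNorm _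
    have h3 : ‖T (x t)‖ * ‖f t‖ ≤ (‖T‖ * ‖x t‖) * ‖f t‖ :=
      mul_le_mul_of_nonneg_right h2 (norm_nonneg _)
    nlinarith [sq_nonneg (‖x t‖ - ‖T‖ * ‖f t‖), norm_nonneg (f t), norm_nonneg (x t)]
  have hfb := hf t ht
  -- V t ≤ lM * ‖x t‖^2, lam ≥ 0
  have hVle : V t ≤ lM * ‖x t‖ ^ 2 := by rw [hV]; exact hquad (x t)
  have hlamnn : 0 ≤ lam := by
    rw [hlam]; apply div_nonneg <;> linarith
  have hlamV : -lam * V t ≥ -(1 - σ) * ‖x t‖ ^ 2 := by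
    have : lam * V t ≤ lam * (lM * ‖x t‖ ^ 2) := mul_le_mul_of_nonneg_left hVle hlamnn
    have hll : lam * lM = 1 - σ := by rw [hlam]; field_simp
    nlinarith
  linarith
end

section
/- Let A and P be real n×n matrices with P symmetric positive definite and AᵀP + PA = -2I. Let λ_m, λ_M > 0 satisfy λ_m‖x‖² ≤ xᵀPx ≤ λ_M‖x‖² for all x ∈ ℝⁿ. Let σ ∈ (0,1), λ = (1-σ)/λ_M, α ∈ (0,λ), λ₀ > 0, β ≥ 0 and ε > 0, and set δ = (λ·λ_m/λ₀)·ε². Suppose x, f : ℝ → ℝⁿ are such that x is differentiable with x'(t) = A x(t) + f(t) for all t ≥ 0, and ‖P‖²‖f(t)‖² ≤ σ‖x(t)‖² + λ₀β·e^{-αt} + λ₀δ for all t ≥ 0. Then x is bounded on [0,∞) and limsup_{t→∞} ‖x(t)‖ ≤ ε. -/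
set_option maxHeartbeats 1000000
set_option synthInstance.maxHeartbeats 200000


open scoped RealInnerProductSpace Matrix

/-- Practical-stabilization conclusion of Theorem 1 for a single perturbed linear system:
with the event-trigger threshold δ = (λ·λ_m/λ₀)·ε², the trajectory is bounded on [0,∞)
and its norm is ultimately bounded by ε. -/
theorem stmt_6 {n : ℕ} (A P : Matrix (Fin n) (Fin n) ℝ)
    (hPsymm : P.IsSymm)
    (hPpos : ∀ z : EuclideanSpace ℝ (Fin n), z ≠ 0 →
      0 < ⟪z, Matrix.toEuclideanCLM (𝕜 := ℝ) P z⟫)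
    (hLyap : Aᵀ * P + P * A = (-2 : ℝ) • (1 : Matrix (Fin n) (Fin n) ℝ))
    (lm lM : ℝ) (hlm : 0 < lm) (hlM : 0 < lM)
    (hquad : ∀ z : EuclideanSpace ℝ (Fin n),
      lm * ‖z‖ ^ 2 ≤ ⟪z, Matrix.toEuclideanCLM (𝕜 := ℝ) P z⟫ ∧
      ⟪z, Matrix.toEuclideanCLM (𝕜 := ℝ) P z⟫ ≤ lM * ‖z‖ ^ 2)
    (σ lam : ℝ) (hσ : σ ∈ Set.Ioo (0 : ℝ) 1) (hlam : lam = (1 - σ) / lM)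
    (α : ℝ) (hα : α ∈ Set.Ioo 0 lam)
    (lam0 β ε δ : ℝ) (hlam0 : 0 < lam0) (hβ : 0 ≤ β) (hε : 0 < ε)
    (hδ : δ = lam * lm / lam0 * ε ^ 2)
    (x f : ℝ → EuclideanSpace ℝ (Fin n))
    (hx : ∀ t ≥ (0 : ℝ), HasDerivAt x (Matrix.toEuclideanCLM (𝕜 := ℝ) A (x t) + f t) t)
    (hf : ∀ t ≥ (0 : ℝ), ‖Matrix.toEuclideanCLM (𝕜 := ℝ) P‖ ^ 2 * ‖f t‖ ^ 2 ≤
      σ * ‖x t‖ ^ 2 + lam0 * β * Real.exp (-α * t) + lam0 * δ) :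
    (∃ C : ℝ, ∀ t ≥ (0 : ℝ), ‖x t‖ ≤ C) ∧
    Filter.limsup (fun t => ‖x t‖) Filter.atTop ≤ ε := by
  obtain ⟨hσ0, hσ1⟩ := hσ
  obtain ⟨hα0, hαlam⟩ := hα
  have hlampos : 0 < lam := lt_trans hα0 hαlam
  set Pc := Matrix.toEuclideanCLM (𝕜 := ℝ) P with hPcdef
  set Ac := Matrix.toEuclideanCLM (𝕜 := ℝ) A with hAcdef
  -- P is self-adjoint
  have hPstar : star P = P := by
    rw [Matrix.star_eq_conjTranspose, Matrix.conjTranspose_eq_transpose_of_trivial]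
    exact hPsymm
  have hPadj : ContinuousLinearMap.adjoint Pc = Pc := by
    rw [← ContinuousLinearMap.star_eq_adjoint, hPcdef, ← map_star, hPstar]
  have hPsym : ∀ u v : EuclideanSpace ℝ (Fin n), ⟪Pc u, v⟫ = ⟪u, Pc v⟫ := by
    intro u v
    conv_lhs => rw [← hPadj]
    exact ContinuousLinearMap.adjoint_inner_left Pc v u
  have hAt : Matrix.toEuclideanCLM (𝕜 := ℝ) Aᵀ = ContinuousLinearMap.adjoint Ac := by
    rw [← ContinuousLinearMap.star_eq_adjoint, hAcdef, ← map_star,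
      Matrix.star_eq_conjTranspose, Matrix.conjTranspose_eq_transpose_of_trivial]
  -- key quadratic identity
  have hkey : ∀ z : EuclideanSpace ℝ (Fin n), ⟪z, Pc (Ac z)⟫ = -‖z‖ ^ 2 := by
    intro z
    have h1 : ⟪z, Matrix.toEuclideanCLM (𝕜 := ℝ) (Aᵀ * P + P * A) z⟫ = -2 * ‖z‖ ^ 2 := by
      rw [hLyap, map_smul, map_one]
      rw [ContinuousLinearMap.smul_apply, ContinuousLinearMap.one_apply,
        inner_smul_right, real_inner_self_eq_norm_sq]
    rw [map_add, map_mul, map_mul] at h1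
    simp only [ContinuousLinearMap.add_apply, ContinuousLinearMap.mul_apply] at h1
    rw [← hPcdef, ← hAcdef, inner_add_right, hAt,
      ContinuousLinearMap.adjoint_inner_right] at h1
    have h2 : ⟪Ac z, Pc z⟫ = ⟪z, Pc (Ac z)⟫ :=
      (real_inner_comm (Pc z) (Ac z)).trans (hPsym z (Ac z))
    rw [h2] at h1
    linarith
  -- Lyapunov function
  set V : ℝ → ℝ := fun t => ⟪x t, Pc (x t)⟫ with hVdef
  have hVlow : ∀ t, lm * ‖x t‖ ^ 2 ≤ V t := fun t => (hquad (x t)).1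
  have hVup : ∀ t, V t ≤ lM * ‖x t‖ ^ 2 := fun t => (hquad (x t)).2
  have hVnn : ∀ t, 0 ≤ V t := fun t =>
    le_trans (by positivity) (hVlow t)
  -- derivative of V
  have hVderiv : ∀ t ≥ (0 : ℝ), HasDerivAt V
      (-2 * ‖x t‖ ^ 2 + 2 * ⟪x t, Pc (f t)⟫) t := by
    intro t ht
    have hxt := hx t ht
    have hPx : HasDerivAt (fun s => Pc (x s)) (Pc (Ac (x t) + f t)) t :=
      Pc.hasFDerivAt.comp_hasDerivAt t hxt
    have hVd := HasDerivAt.inner ℝ hxt hPx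
    have hval : ⟪x t, Pc (Ac (x t) + f t)⟫ + ⟪Ac (x t) + f t, Pc (x t)⟫
        = -2 * ‖x t‖ ^ 2 + 2 * ⟪x t, Pc (f t)⟫ := by
      have e2 : ⟪Ac (x t) + f t, Pc (x t)⟫ = ⟪x t, Pc (Ac (x t) + f t)⟫ :=
        (real_inner_comm (Pc (x t)) (Ac (x t) + f t)).trans
          (hPsym (x t) (Ac (x t) + f t))
      rw [e2, map_add, inner_add_right, hkey]
      ring
    rw [hval] at hVd
    exact hVd
  -- forcing term
  set g : ℝ → ℝ := fun t => lam0 * β * Real.exp (-α * t) + lam0 * δ with hgdef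
  have hδpos : 0 < δ := by
    rw [hδ]; positivity
  -- differential inequality
  have hVineq : ∀ t ≥ (0 : ℝ),
      -2 * ‖x t‖ ^ 2 + 2 * ⟪x t, Pc (f t)⟫ ≤ -lam * V t + g t := by
    intro t ht
    have h1 : ⟪x t, Pc (f t)⟫ ≤ ‖x t‖ * (‖Pc‖ * ‖f t‖) := by
      refine le_trans (real_inner_le_norm _ _) ?_
      exact mul_le_mul_of_nonneg_left (Pc.le_opNorm (f t)) (norm_nonneg _)
    have h2 : 2 * (‖x t‖ * (‖Pc‖ * ‖f t‖)) ≤ ‖x t‖ ^ 2 + (‖Pc‖ * ‖f t‖) ^ 2 := by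
      nlinarith [sq_nonneg (‖x t‖ - ‖Pc‖ * ‖f t‖)]
    have h3 : (‖Pc‖ * ‖f t‖) ^ 2 ≤ σ * ‖x t‖ ^ 2 + lam0 * β * Real.exp (-α * t) + lam0 * δ := by
      have := hf t ht
      calc (‖Pc‖ * ‖f t‖) ^ 2 = ‖Pc‖ ^ 2 * ‖f t‖ ^ 2 := by ring
        _ ≤ _ := this
    have h4 : lam * V t ≤ (1 - σ) * ‖x t‖ ^ 2 := by
      have := hVup t
      have hlamlM : lam * lM = 1 - σ := by
        rw [hlam]; field_simp
      calc lam * V t ≤ lam * (lM * ‖x t‖ ^ 2) :=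
            mul_le_mul_of_nonneg_left this hlampos.le
        _ = (1 - σ) * ‖x t‖ ^ 2 := by rw [← hlamlM]; ring
    simp only [hgdef]
    linarith [h1, h2, h3, h4]
  -- Gronwall setup
  set K2 : ℝ := lam0 * β / (lam - α) with hK2def
  set K3 : ℝ := lm * ε ^ 2 with hK3def
  have hlamα : 0 < lam - α := by linarith
  have hK2nn : 0 ≤ K2 := by positivity
  have hK3pos : 0 < K3 := by positivity
  have hK3eq : lam * K3 = lam0 * δ := by
    rw [hK3def, hδ]; field_simp
  have hK2eq : (lam - α) * K2 = lam0 * β := by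
    rw [hK2def]; field_simp
  set G : ℝ → ℝ := fun t => K2 * Real.exp ((lam - α) * t) + K3 * Real.exp (lam * t) with hGdef
  have hGderiv : ∀ t : ℝ, HasDerivAt G
      (K2 * (Real.exp ((lam - α) * t) * (lam - α)) + K3 * (Real.exp (lam * t) * lam)) t := by
    intro t
    have h1 : HasDerivAt (fun s : ℝ => Real.exp ((lam - α) * s))
        (Real.exp ((lam - α) * t) * (lam - α)) t :=
      ((hasDerivAt_id t).const_mul (lam - α)).exp.congr_deriv (by simp only [id_eq]; ring)
    have h2 : HasDerivAt (fun s : ℝ => Real.exp (lam * s))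
        (Real.exp (lam * t) * lam) t :=
      ((hasDerivAt_id t).const_mul lam).exp.congr_deriv (by simp only [id_eq]; ring)
    exact (h1.const_mul K2).add (h2.const_mul K3)
  set F : ℝ → ℝ := fun t => Real.exp (lam * t) * V t - G t with hFdef
  have hFderiv : ∀ t ≥ (0 : ℝ), HasDerivAt F
      (Real.exp (lam * t) * lam * V t
        + Real.exp (lam * t) * (-2 * ‖x t‖ ^ 2 + 2 * ⟪x t, Pc (f t)⟫)
        - (K2 * (Real.exp ((lam - α) * t) * (lam - α)) + K3 * (Real.exp (lam * t) * lam))) t := by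
    intro t ht
    have hE : HasDerivAt (fun s : ℝ => Real.exp (lam * s)) (Real.exp (lam * t) * lam) t :=
      ((hasDerivAt_id t).const_mul lam).exp.congr_deriv (by simp only [id_eq]; ring)
    exact ((hE.mul (hVderiv t ht)).sub (hGderiv t))
  have hFderiv_nonpos : ∀ t ≥ (0 : ℝ),
      Real.exp (lam * t) * lam * V t
        + Real.exp (lam * t) * (-2 * ‖x t‖ ^ 2 + 2 * ⟪x t, Pc (f t)⟫)
        - (K2 * (Real.exp ((lam - α) * t) * (lam - α)) + K3 * (Real.exp (lam * t) * lam)) ≤ 0 := by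
    intro t ht
    have hVi := hVineq t ht
    have hexp : Real.exp ((lam - α) * t) = Real.exp (lam * t) * Real.exp (-α * t) := by
      rw [← Real.exp_add]; ring_nf
    have hGp : K2 * (Real.exp ((lam - α) * t) * (lam - α)) + K3 * (Real.exp (lam * t) * lam)
        = Real.exp (lam * t) * g t := by
      simp only [hgdef]
      rw [hexp]
      linear_combination (Real.exp (lam * t) * Real.exp (-α * t)) * hK2eq
        + Real.exp (lam * t) * hK3eq
    rw [hGp]
    have hcore : lam * V t + (-2 * ‖x t‖ ^ 2 + 2 * ⟪x t, Pc (f t)⟫) - g t ≤ 0 := by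
      linarith
    nlinarith [mul_le_mul_of_nonneg_left hcore (Real.exp_pos (lam * t)).le]
  -- F is antitone on [0, ∞)
  have hFanti : AntitoneOn F (Set.Ici (0 : ℝ)) := by
    apply antitoneOn_of_deriv_nonpos (convex_Ici 0)
    · intro t ht
      exact (hFderiv t ht).continuousAt.continuousWithinAt
    · intro t ht
      rw [interior_Ici] at ht
      exact (hFderiv t (le_of_lt ht)).differentiableAt.differentiableWithinAt
    · intro t ht
      rw [interior_Ici] at ht
      rw [(hFderiv t (le_of_lt ht)).deriv]
      exact hFderiv_nonpos t (le_of_lt ht)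
  -- main pointwise bound
  have hmain : ∀ t ≥ (0 : ℝ),
      V t ≤ V 0 * Real.exp (-(lam * t)) + K2 * Real.exp (-(α * t)) + K3 := by
    intro t ht
    have hF0 : F t ≤ F 0 := hFanti (Set.self_mem_Ici) ht ht
    have hF0v : F 0 = V 0 - (K2 + K3) := by
      simp [hFdef, hGdef]
    have h1 : Real.exp (lam * t) * V t ≤ V 0 + G t := by
      have : Real.exp (lam * t) * V t - G t ≤ V 0 - (K2 + K3) := by
        rw [← hF0v]; exact hF0
      have hK23 : 0 ≤ K2 + K3 := by linarith
      linarith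
    have p1 : Real.exp (-(lam * t)) * Real.exp (lam * t) = 1 := by
      rw [← Real.exp_add]; norm_num
    have p2 : Real.exp (-(α * t)) * Real.exp (lam * t) = Real.exp ((lam - α) * t) := by
      rw [← Real.exp_add]; ring_nf
    have expand : (V 0 * Real.exp (-(lam * t)) + K2 * Real.exp (-(α * t)) + K3)
        * Real.exp (lam * t) = V 0 + G t := by
      simp only [hGdef]
      linear_combination V 0 * p1 + K2 * p2
    have key : V t * Real.exp (lam * t)
        ≤ (V 0 * Real.exp (-(lam * t)) + K2 * Real.exp (-(α * t)) + K3) * Real.exp (lam * t) := by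
      rw [expand]; linarith
    exact le_of_mul_le_mul_right key (Real.exp_pos _)
  -- envelope function
  set h : ℝ → ℝ := fun t =>
    Real.sqrt (V 0 / lm * Real.exp (-(lam * t)) + K2 / lm * Real.exp (-(α * t)) + ε ^ 2)
    with hhdef
  have hxh : ∀ t ≥ (0 : ℝ), ‖x t‖ ≤ h t := by
    intro t ht
    have h1 : lm * ‖x t‖ ^ 2 ≤ V 0 * Real.exp (-(lam * t)) + K2 * Real.exp (-(α * t)) + K3 :=
      le_trans (hVlow t) (hmain t ht)
    have hr : lm * (V 0 / lm * Real.exp (-(lam * t)) + K2 / lm * Real.exp (-(α * t)) + ε ^ 2)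
        = V 0 * Real.exp (-(lam * t)) + K2 * Real.exp (-(α * t)) + K3 := by
      rw [hK3def]; field_simp
    have h2' : lm * ‖x t‖ ^ 2
        ≤ lm * (V 0 / lm * Real.exp (-(lam * t)) + K2 / lm * Real.exp (-(α * t)) + ε ^ 2) := by
      rw [hr]; exact h1
    have h2 := (mul_le_mul_iff_right₀ hlm).mp h2'
    calc ‖x t‖ = Real.sqrt (‖x t‖ ^ 2) := (Real.sqrt_sq (norm_nonneg _)).symm
      _ ≤ h t := Real.sqrt_le_sqrt h2
  have hV0nn : 0 ≤ V 0 := hVnn 0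
  -- boundedness
  have hbdd : ∀ t ≥ (0 : ℝ), ‖x t‖ ≤ Real.sqrt (V 0 / lm + K2 / lm + ε ^ 2) := by
    intro t ht
    refine le_trans (hxh t ht) (Real.sqrt_le_sqrt ?_)
    have e1 : Real.exp (-(lam * t)) ≤ 1 := Real.exp_le_one_iff.mpr (by nlinarith)
    have e2 : Real.exp (-(α * t)) ≤ 1 := Real.exp_le_one_iff.mpr (by nlinarith)
    have c1 : 0 ≤ V 0 / lm := by positivity
    have c2 : 0 ≤ K2 / lm := by positivity
    nlinarith [Real.exp_pos (-(lam * t)), Real.exp_pos (-(α * t))]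
  refine ⟨⟨Real.sqrt (V 0 / lm + K2 / lm + ε ^ 2), hbdd⟩, ?_⟩
  -- limsup bound
  have htend : Filter.Tendsto h Filter.atTop (nhds ε) := by
    have t1 : Filter.Tendsto (fun t : ℝ => Real.exp (-(lam * t))) Filter.atTop (nhds 0) := by
      have : Filter.Tendsto (fun t : ℝ => lam * t) Filter.atTop Filter.atTop :=
        Filter.Tendsto.const_mul_atTop hlampos Filter.tendsto_id
      exact Real.tendsto_exp_neg_atTop_nhds_zero.comp this
    have t2 : Filter.Tendsto (fun t : ℝ => Real.exp (-(α * t))) Filter.atTop (nhds 0) := by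
      have : Filter.Tendsto (fun t : ℝ => α * t) Filter.atTop Filter.atTop :=
        Filter.Tendsto.const_mul_atTop hα0 Filter.tendsto_id
      exact Real.tendsto_exp_neg_atTop_nhds_zero.comp this
    have tinner : Filter.Tendsto
        (fun t => V 0 / lm * Real.exp (-(lam * t)) + K2 / lm * Real.exp (-(α * t)) + ε ^ 2)
        Filter.atTop (nhds (V 0 / lm * 0 + K2 / lm * 0 + ε ^ 2)) :=
      ((t1.const_mul _).add (t2.const_mul _)).add tendsto_const_nhds
    have : Filter.Tendsto h Filter.atTop (nhds (Real.sqrt (V 0 / lm * 0 + K2 / lm * 0 + ε ^ 2))) :=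
      tinner.sqrt
    simpa [Real.sqrt_sq hε.le] using this
  have hev : (fun t => ‖x t‖) ≤ᶠ[Filter.atTop] h :=
    Filter.eventually_atTop.mpr ⟨0, hxh⟩
  calc Filter.limsup (fun t => ‖x t‖) Filter.atTop
      ≤ Filter.limsup h Filter.atTop :=
        Filter.limsup_le_limsup hev
          (Filter.isCoboundedUnder_le_of_le Filter.atTop (fun t => norm_nonneg (x t)))
          htend.isBoundedUnder_le
    _ = ε := htend.limsup_eq
end
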